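/- Let k be a field, R = k[[x,y]]/(x², xy), and m = (x, y) the maximal ideal of R. Then depth_R m = ldim_R m = 0 < 1 = dim_R m, and depth R = 0 < 1 = ldim_R R = dim R. -/

import Mathlib

open IsLocalRing CategoryTheory

/-- Krull dimension of a module: the Krull dimension of its support. -/
noncomputable def mdim (R : Type*) [CommRing R] (M : Type*) [AddCommGroup M] [Module R M] :
    WithBot ℕ∞ :=
  Order.krullDim (Module.support R M)

/-- The little dimension of a module over a local ring:
`ldim_R M = inf { dim_R (Rx) : x ∈ M \ mM }` (infimum over the empty set is `⊤`). -/
noncomputable def ldim (R : Type*) [CommRing R] [IsLocalRing R] (M : Type*) [AddCommGroup M]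
    [Module R M] : WithBot ℕ∞ :=
  ⨅ x : {x : M // x ∉ (maximalIdeal R • ⊤ : Submodule R M)},
    mdim R (Submodule.span R {x.1})

/-- Depth of a module over a local ring: the supremum of lengths of regular sequences on `M`
consisting of elements of the maximal ideal. -/
noncomputable def mdepth (R : Type*) [CommRing R] [IsLocalRing R] (M : Type*) [AddCommGroup M]
    [Module R M] : ℕ∞ :=
  sSup {n : ℕ∞ | ∃ rs : List R, (rs.length : ℕ∞) = n ∧ (∀ r ∈ rs, r ∈ maximalIdeal R) ∧
    RingTheory.Sequence.IsRegular M rs}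


section StmtAux
open MvPowerSeries Finsupp

section
variable {k : Type*} [Field k]

lemma aux_eq_single_one (a : Fin 2 →₀ ℕ) (h : a 0 = 0) : a = Finsupp.single 1 (a 1) := by
  ext i
  fin_cases i <;> simp [Finsupp.single_apply, h]

lemma aux_coeff_single_mul (s : Fin 2) (n : ℕ) (f g : MvPowerSeries (Fin 2) k) :
    MvPowerSeries.coeff (R := k) (single s n) (f * g) =
      ∑ p ∈ Finset.HasAntidiagonal.antidiagonal n,
        MvPowerSeries.coeff (R := k) (single s p.1) f * MvPowerSeries.coeff (R := k) (single s p.2) g := by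
  rw [MvPowerSeries.coeff_mul, Finsupp.antidiagonal_single, Finset.sum_map]
  rfl

lemma aux_coeff_e0_mul (f g : MvPowerSeries (Fin 2) k) :
    MvPowerSeries.coeff (R := k) (single (0 : Fin 2) 1) (f * g) =
      MvPowerSeries.coeff (R := k) 0 f * MvPowerSeries.coeff (R := k) (single 0 1) g +
        MvPowerSeries.coeff (R := k) (single 0 1) f * MvPowerSeries.coeff (R := k) 0 g := by
  rw [aux_coeff_single_mul]
  rw [show Finset.HasAntidiagonal.antidiagonal 1 = {(0,1),(1,0)} from rfl]
  simp [MvPowerSeries.coeff_zero_eq_constantCoeff]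

end

section
variable (k : Type*) [Field k]

/-- The ideal of power series whose constant coefficient and `X 0`-coefficient vanish. -/
def auxJ : Ideal (MvPowerSeries (Fin 2) k) where
  carrier := {f | MvPowerSeries.coeff (R := k) 0 f = 0 ∧ MvPowerSeries.coeff (R := k) (single (0:Fin 2) 1) f = 0}
  add_mem' := by
    rintro a b ⟨h1, h2⟩ ⟨h3, h4⟩
    refine ⟨?_, ?_⟩ <;> rw [map_add] <;> simp [h1, h2, h3, h4]
  zero_mem' := by simp
  smul_mem' := by
    rintro c f ⟨h1, h2⟩
    refine ⟨?_, ?_⟩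
    · simp only [smul_eq_mul, MvPowerSeries.coeff_zero_eq_constantCoeff, map_mul]
      rw [MvPowerSeries.coeff_zero_eq_constantCoeff] at h1
      simp [h1]
    · rw [smul_eq_mul, aux_coeff_e0_mul, h1, h2]
      ring

variable {k}

lemma mem_auxJ {f : MvPowerSeries (Fin 2) k} :
    f ∈ auxJ k ↔ MvPowerSeries.coeff (R := k) 0 f = 0 ∧
      MvPowerSeries.coeff (R := k) (single (0:Fin 2) 1) f = 0 := by
  constructor <;> exact fun h => h


lemma auxI_le_auxJ :
    Ideal.span {(MvPowerSeries.X 0 : MvPowerSeries (Fin 2) k) ^ 2,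
      (MvPowerSeries.X 0 : MvPowerSeries (Fin 2) k) * MvPowerSeries.X 1} ≤ auxJ k := by
  rw [Ideal.span_le]
  rintro f (rfl | rfl)
  · rw [SetLike.mem_coe, mem_auxJ, sq, aux_coeff_e0_mul]
    simp
  · rw [SetLike.mem_coe, mem_auxJ, aux_coeff_e0_mul]
    simp

lemma mul_mem_auxJ {f g : MvPowerSeries (Fin 2) k}
    (hf : MvPowerSeries.constantCoeff (σ := Fin 2) (R := k) f = 0)
    (hg : MvPowerSeries.constantCoeff (σ := Fin 2) (R := k) g = 0) : f * g ∈ auxJ k := by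
  rw [mem_auxJ, aux_coeff_e0_mul]
  simp [MvPowerSeries.coeff_zero_eq_constantCoeff, hf, hg]

lemma X0_not_mem_auxJ : (MvPowerSeries.X 0 : MvPowerSeries (Fin 2) k) ∉ auxJ k := by
  rw [mem_auxJ]
  rintro ⟨-, h⟩
  rw [MvPowerSeries.coeff_X, if_pos rfl] at h
  exact one_ne_zero h

lemma X0_not_mem_auxI : (MvPowerSeries.X 0 : MvPowerSeries (Fin 2) k) ∉
    Ideal.span {(MvPowerSeries.X 0 : MvPowerSeries (Fin 2) k) ^ 2,
      (MvPowerSeries.X 0 : MvPowerSeries (Fin 2) k) * MvPowerSeries.X 1} :=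
  fun h => X0_not_mem_auxJ (auxI_le_auxJ h)

end

section
variable {k : Type*} [Field k]

lemma aux_mem_span_X (f : MvPowerSeries (Fin 2) k)
    (hf : MvPowerSeries.constantCoeff (σ := Fin 2) (R := k) f = 0) :
    f ∈ Ideal.span {(MvPowerSeries.X 0 : MvPowerSeries (Fin 2) k), MvPowerSeries.X 1} := by
  classical
  set f₁ : MvPowerSeries (Fin 2) k := fun d => if 0 < d 0 then MvPowerSeries.coeff (R := k) d f else 0
    with hf₁
  have hd1 : (MvPowerSeries.X (0 : Fin 2) : MvPowerSeries (Fin 2) k) ∣ f₁ := by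
    rw [MvPowerSeries.X_dvd_iff]
    intro m hm
    show (if 0 < m 0 then MvPowerSeries.coeff (R := k) m f else 0) = 0
    rw [hm]
    simp
  have hd2 : (MvPowerSeries.X (1 : Fin 2) : MvPowerSeries (Fin 2) k) ∣ (f - f₁) := by
    rw [MvPowerSeries.X_dvd_iff]
    intro m hm
    rw [map_sub]
    show MvPowerSeries.coeff (R := k) m f - (if 0 < m 0 then MvPowerSeries.coeff (R := k) m f else 0) = 0
    by_cases h0 : 0 < m 0
    · rw [if_pos h0, sub_self]
    · rw [if_neg h0]
      have hm0 : m = 0 := by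
        ext i
        fin_cases i
        · simpa using Nat.eq_zero_of_not_pos h0
        · simpa using hm
      rw [hm0]
      simpa [MvPowerSeries.coeff_zero_eq_constantCoeff] using hf
  have : f = f₁ + (f - f₁) := by ring
  rw [this]
  obtain ⟨c, hc⟩ := hd1
  obtain ⟨d, hd⟩ := hd2
  refine Ideal.add_mem _ ?_ ?_
  · rw [hc]
    exact Ideal.mul_mem_right _ _ (Ideal.subset_span (by simp))
  · rw [hd]
    exact Ideal.mul_mem_right _ _ (Ideal.subset_span (by simp))

lemma aux_X0_dvd (f : MvPowerSeries (Fin 2) k)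
    (hf : ∀ n : ℕ, MvPowerSeries.coeff (R := k) (single (1 : Fin 2) n) f = 0) :
    (MvPowerSeries.X (0 : Fin 2) : MvPowerSeries (Fin 2) k) ∣ f := by
  rw [MvPowerSeries.X_dvd_iff]
  intro m hm
  rw [aux_eq_single_one m hm]
  exact hf _

end

section
variable (k : Type*) [Field k]

/-- The ring hom `k⟦X₀,X₁⟧ → k⟦Y⟧` sending `X₀ ↦ 0`, `X₁ ↦ Y`. -/
noncomputable def auxPhi : MvPowerSeries (Fin 2) k →+* PowerSeries k where
  toFun f := PowerSeries.mk fun n => MvPowerSeries.coeff (R := k) (single (1 : Fin 2) n) f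
  map_one' := by
    ext n
    rw [PowerSeries.coeff_mk, MvPowerSeries.coeff_one, PowerSeries.coeff_one]
    simp [Finsupp.single_eq_zero]
  map_mul' f g := by
    ext n
    rw [PowerSeries.coeff_mk, PowerSeries.coeff_mul, aux_coeff_single_mul]
    exact Finset.sum_congr rfl fun p _ => by rw [PowerSeries.coeff_mk, PowerSeries.coeff_mk]
  map_zero' := by
    ext n
    simp
  map_add' f g := by
    ext n
    simp [PowerSeries.coeff_mk]

variable {k}

lemma auxPhi_X0 : auxPhi k (MvPowerSeries.X 0) = 0 := by
  ext n
  rw [show auxPhi k (MvPowerSeries.X 0) =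
    PowerSeries.mk fun n => MvPowerSeries.coeff (R := k) (single (1 : Fin 2) n) (MvPowerSeries.X 0)
    from rfl, PowerSeries.coeff_mk, MvPowerSeries.coeff_X]
  rw [if_neg, map_zero]
  intro h
  have := DFunLike.congr_fun h (0 : Fin 2)
  simp [Finsupp.single_apply] at this

lemma auxPhi_surjective : Function.Surjective (auxPhi k) := by
  classical
  intro g
  let φ : MvPowerSeries (Fin 2) k := fun d => if d 0 = 0 then PowerSeries.coeff (R := k) (d 1) g else 0
  refine ⟨φ, ?_⟩
  ext n
  have h : ∀ ψ, auxPhi k ψ = PowerSeries.mk fun n => MvPowerSeries.coeff (R := k) (single (1 : Fin 2) n) ψ := fun _ => rfl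
  rw [h, PowerSeries.coeff_mk, MvPowerSeries.coeff_apply]
  show (if (single (1 : Fin 2) n) 0 = 0 then PowerSeries.coeff (R := k) ((single (1:Fin 2) n) 1) g
    else 0) = _
  rw [if_pos (by simp [Finsupp.single_apply]), Finsupp.single_eq_same]

lemma mem_ker_auxPhi_iff {f : MvPowerSeries (Fin 2) k} :
    f ∈ RingHom.ker (auxPhi k) ↔ (MvPowerSeries.X (0 : Fin 2) : MvPowerSeries (Fin 2) k) ∣ f := by
  constructor
  · intro h
    refine aux_X0_dvd f fun n => ?_
    have : auxPhi k f = 0 := h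
    have := congrArg (PowerSeries.coeff (R := k) n) this
    rwa [show auxPhi k f =
      PowerSeries.mk fun n => MvPowerSeries.coeff (R := k) (single (1 : Fin 2) n) f from rfl,
      PowerSeries.coeff_mk, map_zero] at this
  · rintro ⟨c, rfl⟩
    rw [RingHom.mem_ker, map_mul, auxPhi_X0, zero_mul]

lemma coeff_one_auxPhi_X1 :
    PowerSeries.coeff (R := k) 1 (auxPhi k (MvPowerSeries.X 1)) = 1 := by
  rw [show auxPhi k (MvPowerSeries.X 1) =
    PowerSeries.mk fun n => MvPowerSeries.coeff (R := k) (single (1 : Fin 2) n) (MvPowerSeries.X 1)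
    from rfl, PowerSeries.coeff_mk, MvPowerSeries.coeff_X, if_pos rfl]

end

section
variable {k : Type*} [Field k]

lemma aux_no_chain (P0 P1 P2 : Ideal (MvPowerSeries (Fin 2) k))
    (hp0 : P0.IsPrime) (hp1 : P1.IsPrime) (hp2 : P2.IsPrime)
    (h0 : Ideal.span {(MvPowerSeries.X 0 : MvPowerSeries (Fin 2) k) ^ 2,
      (MvPowerSeries.X 0 : MvPowerSeries (Fin 2) k) * MvPowerSeries.X 1} ≤ P0)
    (h01 : P0 < P1) (h12 : P1 < P2) : False := by
  have hX0 : ∀ (P : Ideal (MvPowerSeries (Fin 2) k)), P.IsPrime → P0 ≤ P →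
      (MvPowerSeries.X (0:Fin 2) : MvPowerSeries (Fin 2) k) ∈ P := by
    intro P hP hle
    exact hP.mem_of_pow_mem 2 (hle (h0 (Ideal.subset_span (Or.inl rfl))))
  have hker : ∀ (P : Ideal (MvPowerSeries (Fin 2) k)), P.IsPrime → P0 ≤ P →
      RingHom.ker (auxPhi k) ≤ P := by
    intro P hP hle f hf
    obtain ⟨c, rfl⟩ := mem_ker_auxPhi_iff.mp hf
    exact Ideal.mul_mem_right _ _ (hX0 P hP hle)
  have hk0 := hker P0 hp0 le_rfl
  have hk1 := hker P1 hp1 h01.le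
  have hk2 := hker P2 hp2 (h01.le.trans h12.le)
  have hcm : ∀ (P : Ideal (MvPowerSeries (Fin 2) k)), RingHom.ker (auxPhi k) ≤ P →
      Ideal.comap (auxPhi k) (Ideal.map (auxPhi k) P) = P := by
    intro P hP
    rw [Ideal.comap_map_of_surjective _ auxPhi_surjective, ← RingHom.ker_eq_comap_bot,
      sup_eq_left.mpr hP]
  haveI hq1 : (Ideal.map (auxPhi k) P1).IsPrime :=
    Ideal.map_isPrime_of_surjective auxPhi_surjective hk1
  haveI hq2 : (Ideal.map (auxPhi k) P2).IsPrime :=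
    Ideal.map_isPrime_of_surjective auxPhi_surjective hk2
  have hne01 : Ideal.map (auxPhi k) P0 ≠ Ideal.map (auxPhi k) P1 := fun h =>
    h01.ne (by rw [← hcm P0 hk0, ← hcm P1 hk1, h])
  have hne12 : Ideal.map (auxPhi k) P1 ≠ Ideal.map (auxPhi k) P2 := fun h =>
    h12.ne (by rw [← hcm P1 hk1, ← hcm P2 hk2, h])
  have hq1ne : Ideal.map (auxPhi k) P1 ≠ ⊥ := by
    intro h
    apply hne01
    rw [h, ← le_bot_iff, ← h]
    exact Ideal.map_mono h01.le
  haveI hq1max : (Ideal.map (auxPhi k) P1).IsMaximal :=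
    IsPrime.to_maximal_ideal hq1ne
  exact hne12 (hq1max.eq_of_le hq2.ne_top (Ideal.map_mono h12.le))

end

section

variable (k : Type*) [Field k]

noncomputable abbrev auxI : Ideal (MvPowerSeries (Fin 2) k) :=
  Ideal.span {(MvPowerSeries.X 0 : MvPowerSeries (Fin 2) k) ^ 2,
    (MvPowerSeries.X 0 : MvPowerSeries (Fin 2) k) * MvPowerSeries.X 1}

variable {k}
set_option linter.unusedSectionVars false
variable {R : Type*} [CommRing R] [IsLocalRing R]
variable (e : R ≃+* (MvPowerSeries (Fin 2) k ⧸ auxI k))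

open IsLocalRing

noncomputable def auxx : R := e.symm (Ideal.Quotient.mk (auxI k) (MvPowerSeries.X 0))

noncomputable def auxy : R := e.symm (Ideal.Quotient.mk (auxI k) (MvPowerSeries.X 1))

lemma auxx_ne_zero : auxx e ≠ 0 := by
  intro h
  rw [auxx, map_eq_zero_iff _ e.symm.injective, Ideal.Quotient.eq_zero_iff_mem] at h
  exact X0_not_mem_auxI h

lemma auxx_mul_auxx : auxx e * auxx e = 0 := by
  apply e.injective
  rw [map_mul, map_zero, auxx, RingEquiv.apply_symm_apply, ← map_mul,
    Ideal.Quotient.eq_zero_iff_mem, ← sq]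
  exact Ideal.subset_span (Or.inl rfl)

lemma auxx_mul_auxy : auxx e * auxy e = 0 := by
  apply e.injective
  rw [map_mul, map_zero, auxx, auxy, RingEquiv.apply_symm_apply, RingEquiv.apply_symm_apply,
    ← map_mul, Ideal.Quotient.eq_zero_iff_mem]
  exact Ideal.subset_span (Or.inr rfl)

lemma auxx_mem : auxx e ∈ maximalIdeal R := by
  rw [mem_maximalIdeal, mem_nonunits_iff]
  intro h
  exact auxx_ne_zero e (h.mul_left_cancel (by rw [auxx_mul_auxx, mul_zero]))

lemma auxy_mem : auxy e ∈ maximalIdeal R := by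
  rw [mem_maximalIdeal, mem_nonunits_iff]
  rintro ⟨u, hu⟩
  apply auxx_ne_zero e
  have : auxx e * (auxy e * (u⁻¹ : Rˣ)) = auxx e := by rw [← hu, Units.mul_inv, mul_one]
  rw [← this, ← mul_assoc, auxx_mul_auxy, zero_mul]

/-- every element of the maximal ideal kills `auxx`. -/
lemma mul_auxx_eq_zero {r : R} (hr : r ∈ maximalIdeal R) : r * auxx e = 0 := by
  obtain ⟨f, hf⟩ := Ideal.Quotient.mk_surjective (e r)
  have hfnu : ¬IsUnit f := by
    intro h
    apply mem_nonunits_iff.mp ((mem_maximalIdeal _).mp hr)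
    have : IsUnit (e r) := hf ▸ h.map (Ideal.Quotient.mk (auxI k))
    simpa using this.map e.symm
  have hfc : MvPowerSeries.constantCoeff (σ := Fin 2) (R := k) f = 0 := by
    by_contra h
    exact hfnu (MvPowerSeries.isUnit_iff_constantCoeff.mpr (isUnit_iff_ne_zero.mpr h))
  obtain ⟨a, b, hab⟩ := Ideal.mem_span_pair.mp (aux_mem_span_X f hfc)
  apply e.injective
  rw [map_mul, map_zero, auxx, RingEquiv.apply_symm_apply, ← hf, ← map_mul,
    Ideal.Quotient.eq_zero_iff_mem]
  have : f * MvPowerSeries.X 0 =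
      a * (MvPowerSeries.X 0 ^ 2) + b * (MvPowerSeries.X 0 * MvPowerSeries.X 1) := by
    rw [← hab]; ring
  rw [this]
  exact Ideal.add_mem _ (Ideal.mul_mem_left _ _ (Ideal.subset_span (Or.inl rfl)))
    (Ideal.mul_mem_left _ _ (Ideal.subset_span (Or.inr rfl)))

lemma auxx_not_mem_sq : auxx e ∉ maximalIdeal R * maximalIdeal R := by
  intro h
  have hx : Ideal.Quotient.mk (auxI k) (MvPowerSeries.X 0) ∈
      Ideal.map e.toRingHom (maximalIdeal R * maximalIdeal R) := by
    have := Ideal.mem_map_of_mem e.toRingHom h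
    rwa [show e.toRingHom (auxx e) = Ideal.Quotient.mk (auxI k) (MvPowerSeries.X 0) by
      simp [auxx]] at this
  rw [Ideal.map_mul] at hx
  have hle : Ideal.map e.toRingHom (maximalIdeal R) * Ideal.map e.toRingHom (maximalIdeal R)
      ≤ Ideal.map (Ideal.Quotient.mk (auxI k)) (auxJ k) := by
    apply Ideal.mul_le.mpr
    intro r' hr' s' hs'
    obtain ⟨r, hr, rfl⟩ := Ideal.mem_map_iff_of_surjective _ e.surjective |>.mp hr'
    obtain ⟨s, hs, rfl⟩ := Ideal.mem_map_iff_of_surjective _ e.surjective |>.mp hs'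
    obtain ⟨f, hf⟩ := Ideal.Quotient.mk_surjective (e r)
    obtain ⟨g, hg⟩ := Ideal.Quotient.mk_surjective (e s)
    have hfc : MvPowerSeries.constantCoeff (σ := Fin 2) (R := k) f = 0 := by
      by_contra hc
      apply mem_nonunits_iff.mp ((mem_maximalIdeal _).mp hr)
      have : IsUnit (e r) :=
        hf ▸ (MvPowerSeries.isUnit_iff_constantCoeff.mpr (isUnit_iff_ne_zero.mpr hc)).map _
      simpa using this.map e.symm
    have hgc : MvPowerSeries.constantCoeff (σ := Fin 2) (R := k) g = 0 := by
      by_contra hc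
      apply mem_nonunits_iff.mp ((mem_maximalIdeal _).mp hs)
      have : IsUnit (e s) :=
        hg ▸ (MvPowerSeries.isUnit_iff_constantCoeff.mpr (isUnit_iff_ne_zero.mpr hc)).map _
      simpa using this.map e.symm
    rw [← hf, ← hg, ← map_mul]
    exact Ideal.mem_map_of_mem _ (mul_mem_auxJ hfc hgc)
  obtain ⟨j, hj, hjx⟩ := Ideal.mem_map_iff_of_surjective _ Ideal.Quotient.mk_surjective |>.mp
    (hle hx)
  apply X0_not_mem_auxJ (k := k)
  have hsub : MvPowerSeries.X 0 - j ∈ auxJ k := by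
    apply auxI_le_auxJ
    rw [← Ideal.Quotient.eq_zero_iff_mem, map_sub, hjx, sub_self]
  simpa using (auxJ k).add_mem hsub hj

end

section

variable {k : Type*} [Field k]
set_option linter.unusedSectionVars false
variable {R : Type*} [CommRing R] [IsLocalRing R]
variable (e : R ≃+* (MvPowerSeries (Fin 2) k ⧸ auxI k))

open IsLocalRing

include e in
lemma aux_ringKrullDim : ringKrullDim R = 1 := by
  have hIker : ∀ f ∈ auxI k, auxPhi k f = 0 := by
    have hle : auxI k ≤ RingHom.ker (auxPhi k) := by
      rw [Ideal.span_le]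
      rintro f (rfl | rfl)
      · rw [SetLike.mem_coe, RingHom.mem_ker, map_pow, auxPhi_X0, zero_pow two_ne_zero]
      · rw [SetLike.mem_coe, RingHom.mem_ker, map_mul, auxPhi_X0, zero_mul]
    exact fun f hf => hle hf
  set ψ : R →+* PowerSeries k :=
    (Ideal.Quotient.lift (auxI k) (auxPhi k) hIker).comp e.toRingHom with hψ
  haveI hkerprime : (RingHom.ker ψ).IsPrime := RingHom.ker_isPrime ψ
  have hkerle : RingHom.ker ψ ≤ maximalIdeal R := by
    intro r hr
    rw [mem_maximalIdeal, mem_nonunits_iff]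
    intro hu
    have : IsUnit (ψ r) := hu.map ψ
    rw [RingHom.mem_ker.mp hr] at this
    exact not_isUnit_zero this
  have hkerlt : RingHom.ker ψ < maximalIdeal R := by
    refine lt_of_le_of_ne hkerle ?_
    · intro heq
      have h1 : auxy e ∈ RingHom.ker ψ := heq ▸ auxy_mem e
      rw [RingHom.mem_ker, hψ, RingHom.comp_apply] at h1
      have h2 : e.toRingHom (auxy e) = Ideal.Quotient.mk (auxI k) (MvPowerSeries.X 1) := by
        simp [auxy]
      rw [h2, Ideal.Quotient.lift_mk] at h1
      have := congrArg (PowerSeries.coeff (R := k) 1) h1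
      rw [coeff_one_auxPhi_X1, map_zero] at this
      exact one_ne_zero this
  apply le_antisymm
  · show Order.krullDim (PrimeSpectrum R) ≤ 1
    have hlen : ∀ p : LTSeries (PrimeSpectrum R), p.length ≤ 1 := by
      intro p
      by_contra hl
      push_neg at hl
      have h2 : 2 ≤ p.length := hl
      set χ : MvPowerSeries (Fin 2) k →+* R :=
        e.symm.toRingHom.comp (Ideal.Quotient.mk (auxI k)) with hχ
      have hχs : Function.Surjective χ :=
        e.symm.surjective.comp Ideal.Quotient.mk_surjective
      have hmono : StrictMono fun i => Ideal.comap χ (p.toFun i).asIdeal := by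
        intro i j hij
        refine lt_of_le_of_ne (Ideal.comap_mono ?_) ?_
        · exact ((PrimeSpectrum.asIdeal_lt_asIdeal _ _).mpr (p.strictMono hij)).le
        · intro hh
          exact (p.strictMono hij).ne congr(⟨$((Ideal.comap_injective_of_surjective χ hχs hh)),
            inferInstance⟩)
      have hI : auxI k ≤ Ideal.comap χ (p.toFun ⟨0, by omega⟩).asIdeal := by
        intro f hf
        rw [Ideal.mem_comap, hχ, RingHom.comp_apply, Ideal.Quotient.eq_zero_iff_mem.mpr hf,
          map_zero]
        exact Ideal.zero_mem _
      refine aux_no_chain (Ideal.comap χ (p.toFun ⟨0, by omega⟩).asIdeal)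
        (Ideal.comap χ (p.toFun ⟨1, by omega⟩).asIdeal)
        (Ideal.comap χ (p.toFun ⟨2, by omega⟩).asIdeal)
        inferInstance inferInstance inferInstance hI ?_ ?_
      · exact hmono (by simp [Fin.lt_def])
      · exact hmono (by simp [Fin.lt_def])
    rw [Order.krullDim_eq_iSup_length,
      show (1 : WithBot ℕ∞) = ((1 : ℕ∞) : WithBot ℕ∞) from rfl, WithBot.coe_le_coe]
    exact iSup_le fun p => by exact_mod_cast hlen p
  · show (1 : WithBot ℕ∞) ≤ Order.krullDim (PrimeSpectrum R)
    have := Order.LTSeries.length_le_krullDim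
      (⟨1, ![⟨RingHom.ker ψ, hkerprime⟩, ⟨maximalIdeal R, inferInstance⟩], by
        intro i
        fin_cases i
        show (⟨RingHom.ker ψ, hkerprime⟩ : PrimeSpectrum R) < ⟨maximalIdeal R, inferInstance⟩
        rw [← PrimeSpectrum.asIdeal_lt_asIdeal]
        exact hkerlt⟩ : LTSeries (PrimeSpectrum R))
    simpa using this
  
end

end StmtAux

/-- for `R = k⟦x,y⟧/(x², xy)` with maximal ideal `m = (x,y)`,
`depth_R m = ldim_R m = 0 < 1 = dim_R m` and `depth R = 0 < 1 = ldim_R R = dim R`. -/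
theorem stmt_16 (k : Type*) [Field k] (R : Type*) [CommRing R] [IsLocalRing R]
    [IsNoetherianRing R]
    (e : R ≃+* (MvPowerSeries (Fin 2) k ⧸
      Ideal.span {(MvPowerSeries.X 0 : MvPowerSeries (Fin 2) k) ^ 2,
        (MvPowerSeries.X 0 : MvPowerSeries (Fin 2) k) * MvPowerSeries.X 1})) :
    mdepth R (maximalIdeal R) = 0 ∧ ldim R (maximalIdeal R) = 0 ∧
      mdim R (maximalIdeal R) = 1 ∧
      mdepth R R = 0 ∧ ldim R R = 1 ∧ ringKrullDim R = 1 := by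
  have hx_ne : auxx e ≠ 0 := auxx_ne_zero e
  have hx_mem : auxx e ∈ maximalIdeal R := auxx_mem e
  have hmul : ∀ r ∈ maximalIdeal R, r * auxx e = 0 := fun r hr => mul_auxx_eq_zero e hr
  have hdim : ringKrullDim R = 1 := aux_ringKrullDim e
  set w : ↥(maximalIdeal R) := ⟨auxx e, hx_mem⟩ with hw_def
  have hw_ne : w ≠ 0 := fun h => hx_ne (congrArg Subtype.val h)
  haveI : Nontrivial ↥(maximalIdeal R) := nontrivial_of_ne w 0 hw_ne
  -- mdepth (maximalIdeal R) = 0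
  have h1 : mdepth R (maximalIdeal R) = 0 := by
    refine le_antisymm (sSup_le ?_) (zero_le ..)
    rintro n ⟨rs, hlen, hmem, hreg⟩
    match rs, hlen with
    | [], hlen => exact le_of_eq (by simpa using hlen.symm)
    | r :: rest, hlen =>
      exfalso
      have hw' := hreg.toIsWeaklyRegular
      rw [RingTheory.Sequence.isWeaklyRegular_cons_iff] at hw'
      have hsr := hw'.1
      have heq : r • w = r • (0 : ↥(maximalIdeal R)) := by
        apply Subtype.ext
        rw [Submodule.coe_smul, Submodule.coe_smul]
        show r * auxx e = r • (0 : R)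
        rw [hmul r (hmem r (List.mem_cons_self)), smul_zero]
      exact hw_ne (hsr heq)
  -- mdepth R R = 0
  have h4 : mdepth R R = 0 := by
    refine le_antisymm (sSup_le ?_) (zero_le ..)
    rintro n ⟨rs, hlen, hmem, hreg⟩
    match rs, hlen with
    | [], hlen => exact le_of_eq (by simpa using hlen.symm)
    | r :: rest, hlen =>
      exfalso
      have hw' := hreg.toIsWeaklyRegular
      rw [RingTheory.Sequence.isWeaklyRegular_cons_iff] at hw'
      have hsr := hw'.1
      have heq : r • auxx e = r • (0 : R) := by
        rw [smul_eq_mul, hmul r (hmem r (List.mem_cons_self)), smul_zero]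
      exact hx_ne (hsr heq)
  -- mdim of the span of w is zero
  have hann : Module.annihilator R ↥(Submodule.span R {w}) = maximalIdeal R := by
    ext r
    rw [show Module.annihilator R ↥(Submodule.span R {w}) =
      (Submodule.span R {w}).annihilator from rfl, Submodule.mem_annihilator_span_singleton]
    constructor
    · intro h
      by_contra hr
      have hu : IsUnit r := by
        rwa [mem_maximalIdeal, mem_nonunits_iff, not_not] at hr
      apply hw_ne
      have : r • w = r • (0 : ↥(maximalIdeal R)) := by rw [h, smul_zero]
      exact (hu.smul_left_cancel).mp this
    · intro hr
      apply Subtype.ext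
      rw [Submodule.coe_smul]
      show r * auxx e = (0 : R)
      exact hmul r hr
  haveI : Module.Finite R ↥(Submodule.span R {w}) :=
    Module.Finite.iff_fg.mpr (Submodule.fg_span_singleton w)
  haveI huniq : Unique ↥(PrimeSpectrum.zeroLocus ((maximalIdeal R : Ideal R) : Set R)) := by
    refine ⟨⟨⟨⟨maximalIdeal R, (maximalIdeal.isMaximal R).isPrime⟩, ?_⟩⟩, ?_⟩
    · rw [PrimeSpectrum.mem_zeroLocus]
    · rintro ⟨p, hp⟩
      apply Subtype.ext
      apply PrimeSpectrum.ext
      rw [PrimeSpectrum.mem_zeroLocus] at hp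
      exact ((maximalIdeal.isMaximal R).eq_of_le p.isPrime.ne_top hp).symm
  have h_mdim_w : mdim R ↥(Submodule.span R {w}) = 0 := by
    unfold mdim
    rw [Module.support_eq_zeroLocus, hann]
    exact Order.krullDim_eq_zero_of_unique
  -- w is not in m • ⊤
  have hw_notmem : w ∉ (maximalIdeal R • ⊤ : Submodule R ↥(maximalIdeal R)) := by
    intro hw
    apply auxx_not_mem_sq e
    have h2 : auxx e ∈ Submodule.map (Submodule.subtype (maximalIdeal R))
        (maximalIdeal R • ⊤) := ⟨w, hw, rfl⟩
    rw [Submodule.map_smul'', Submodule.map_subtype_top] at h2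
    rwa [Ideal.smul_eq_mul] at h2
  -- ldim (maximalIdeal R) = 0
  have h2 : ldim R (maximalIdeal R) = 0 := by
    refine le_antisymm (iInf_le_of_le ⟨w, hw_notmem⟩ (le_of_eq h_mdim_w)) (le_iInf ?_)
    intro z
    have hz : z.1 ≠ 0 := fun h => z.2 (h ▸ Submodule.zero_mem _)
    haveI : Nontrivial ↥(Submodule.span R {z.1}) := Submodule.nontrivial_span_singleton hz
    have hne : Module.support R ↥(Submodule.span R {z.1}) ≠ ∅ := fun h =>
      not_subsingleton _ (Module.support_eq_empty_iff.mp h)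
    haveI : Nonempty ↥(Module.support R ↥(Submodule.span R {z.1})) :=
      Set.nonempty_coe_sort.mpr (Set.nonempty_iff_ne_empty.mpr hne)
    exact Order.krullDim_nonneg
  -- mdim (maximalIdeal R) = 1
  haveI : Module.Finite R ↥(maximalIdeal R) :=
    Module.Finite.iff_fg.mpr (IsNoetherian.noetherian _)
  have h3 : mdim R (maximalIdeal R) = 1 := by
    unfold mdim
    have hsupp : Module.support R ↥(maximalIdeal R) = Set.univ := by
      rw [Module.support_eq_zeroLocus]
      apply Set.eq_univ_of_forall
      intro p
      rw [PrimeSpectrum.mem_zeroLocus]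
      intro r hr
      rw [SetLike.mem_coe] at hr
      have hrm : r ∈ maximalIdeal R := by
        by_contra hrm
        have hu : IsUnit r := by
          rwa [mem_maximalIdeal, mem_nonunits_iff, not_not] at hrm
        apply hw_ne
        have := Module.mem_annihilator.mp hr w
        have h0 : r • w = r • (0 : ↥(maximalIdeal R)) := by rw [this, smul_zero]
        exact (hu.smul_left_cancel).mp h0
      have hrr : r * r = 0 := by
        have := Module.mem_annihilator.mp hr ⟨r, hrm⟩
        exact congrArg Subtype.val this
      have : r ^ 2 ∈ p.asIdeal := by
        rw [sq, hrr]
        exact zero_mem _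
      exact p.isPrime.mem_of_pow_mem 2 this
    rw [hsupp, Order.krullDim_eq_of_orderIso (OrderIso.Set.univ)]
    exact hdim
  -- annihilator of R is bot
  have hannR : Module.annihilator R R = ⊥ := by
    ext r
    rw [Module.mem_annihilator, Ideal.mem_bot]
    constructor
    · intro h
      simpa using h 1
    · rintro rfl
      intro m
      rw [zero_smul]
  -- mdim of span of a unit is 1
  have hmdim_top : ∀ z : R, IsUnit z → mdim R ↥(Submodule.span R {z}) = 1 := by
    intro z hz
    have htop : Submodule.span R {z} = (⊤ : Ideal R) := Ideal.span_singleton_eq_top.mpr hz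
    have equiv : ↥(Submodule.span R {z}) ≃ₗ[R] R :=
      (LinearEquiv.ofEq _ _ htop).trans Submodule.topEquiv
    unfold mdim
    rw [equiv.support_eq, Module.support_eq_zeroLocus, hannR]
    rw [show ((⊥ : Ideal R) : Set R) = ((⊥ : Ideal R) : Set R) from rfl,
      PrimeSpectrum.zeroLocus_bot,
      Order.krullDim_eq_of_orderIso (OrderIso.Set.univ)]
    exact hdim
  -- the smul-top for R
  have hmtop : (maximalIdeal R • ⊤ : Submodule R R) = maximalIdeal R := by
    rw [Ideal.smul_eq_mul, Ideal.mul_top]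
  -- ldim R R = 1
  have h5 : ldim R R = 1 := by
    have hone : (1 : R) ∉ (maximalIdeal R • ⊤ : Submodule R R) := by
      rw [hmtop]
      intro h
      exact (maximalIdeal.isMaximal R).ne_top ((Ideal.eq_top_iff_one _).mpr h)
    refine le_antisymm (iInf_le_of_le ⟨1, hone⟩ (le_of_eq (hmdim_top 1 isUnit_one)))
      (le_iInf ?_)
    rintro ⟨v, hv⟩
    rw [hmtop] at hv
    have hz : IsUnit v := by
      rwa [mem_maximalIdeal, mem_nonunits_iff, not_not] at hv
    exact le_of_eq (hmdim_top v hz).symm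
  exact ⟨h1, h2, h3, h4, h5, hdim⟩
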